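/- Let p ≥ 2 and let λ₀ ∈ 𝒞_{p−1}, i.e. λ₀ ≠ 0 and iλ₀ is a prepole of f_{λ₀} of order p−1. Then for every ε > 0 there exists λ with 0 < |λ − λ₀| < ε and λ ∈ 𝒞_p, i.e. iλ is a prepole of f_λ of order p. (Virtual centers of order p accumulate at each virtual center of order p−1.) -/

import Mathlib

open Complex Filter

/-- The tangent family: `f_λ(z) = λ · tan z`, with Mathlib's total complex tangent. -/
noncomputable def ftan (lam : ℂ) : ℂ → ℂ := fun z => lam * Complex.tan z

/-- `z` is a prepole of `f_λ` of order `p` (for `p ≥ 1`): `cos (f_λ^[p−1] z) = 0`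
and `cos (f_λ^[j] z) ≠ 0` for all `0 ≤ j < p−1`. -/
def IsPrepole (lam : ℂ) (p : ℕ) (z : ℂ) : Prop :=
  Complex.cos ((ftan lam)^[p - 1] z) = 0 ∧
  ∀ j < p - 1, Complex.cos ((ftan lam)^[j] z) ≠ 0

/-- The orbit of `z` under `f_λ` is pole-free up to time `q`. -/
def PoleFree (lam : ℂ) (q : ℕ) (z : ℂ) : Prop :=
  ∀ j < q, Complex.cos ((ftan lam)^[j] z) ≠ 0

open Topology

/-- auxiliary: the orbit of the asymptotic value `iλ` as a function of `λ`. -/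
noncomputable def gg (j : ℕ) (lam : ℂ) : ℂ := (ftan lam)^[j] (Complex.I * lam)

/-- auxiliary: parameters whose orbit is pole-free for the first `j` steps. -/
def AA (j : ℕ) : Set ℂ := {lam | ∀ i < j, Complex.cos (gg i lam) ≠ 0}

lemma gg_succ (j : ℕ) (lam : ℂ) :
    gg (j+1) lam = lam * Complex.sin (gg j lam) / Complex.cos (gg j lam) := by
  simp [gg, Function.iterate_succ_apply', ftan, Complex.tan_eq_sin_div_cos, mul_div_assoc]

lemma gg_zero (j : ℕ) : gg j 0 = 0 := by
  induction j with
  | zero => simp [gg]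
  | succ j ih => rw [gg_succ, ih]; simp

lemma zero_mem_AA (j : ℕ) : (0 : ℂ) ∈ AA j := by
  intro i _
  rw [gg_zero]
  simp

lemma AA_anti {i j : ℕ} (h : i ≤ j) : AA j ⊆ AA i := fun lam hlam k hk => hlam k (lt_of_lt_of_le hk h)

lemma AA_preconn {j : ℕ} (hc : (AA j)ᶜ.Countable) : IsPreconnected (AA j) := by
  have h2 : 1 < Module.rank ℝ ℂ := by
    rw [Complex.rank_real_complex]; norm_num
  have := (hc.isPathConnected_compl_of_one_lt_rank h2).isConnected.isPreconnected
  rwa [compl_compl] at this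

lemma cos_gg_eventually_ne (j : ℕ) (hc : (AA j)ᶜ.Countable)
    (han : AnalyticOnNhd ℂ (gg j) (AA j)) {x : ℂ} (hx : x ∈ AA j) :
    ∀ᶠ z in 𝓝[≠] x, Complex.cos (gg j z) ≠ 0 := by
  have hφan : AnalyticOnNhd ℂ (fun lam => Complex.cos (gg j lam)) (AA j) := by
    intro y hy
    exact
      (Complex.differentiable_cos.analyticAt (gg j y)).comp (han y hy)
  rcases (hφan x hx).eventually_eq_zero_or_eventually_ne_zero with h | h
  · exfalso
    have hfreq : ∃ᶠ z in 𝓝[≠] x, Complex.cos (gg j z) = 0 :=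
      (h.filter_mono nhdsWithin_le_nhds).frequently
    have heq := hφan.eqOn_zero_of_preconnected_of_frequently_eq_zero (AA_preconn hc) hx hfreq
    have h0 := heq (zero_mem_AA j)
    simp only [Pi.zero_apply, gg_zero] at h0
    simp at h0
  · exact h

lemma main_ind (j : ℕ) :
    IsOpen (AA j) ∧ (AA j)ᶜ.Countable ∧ AnalyticOnNhd ℂ (gg j) (AA j) := by
  induction j with
  | zero =>
      have h0 : AA 0 = Set.univ := by ext lam; simp [AA]
      rw [h0]
      refine ⟨isOpen_univ, by simp, ?_⟩
      have : gg 0 = fun lam => Complex.I * lam := by funext lam; simp [gg]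
      rw [this]
      exact fun x _ => (analyticAt_const).mul analyticAt_id
  | succ j ih =>
      obtain ⟨ho, hc, han⟩ := ih
      have hφan : AnalyticOnNhd ℂ (fun lam => Complex.cos (gg j lam)) (AA j) := by
        intro y hy
        exact
          (Complex.differentiable_cos.analyticAt (gg j y)).comp (han y hy)
      have hsucc_eq : AA (j+1) = AA j ∩ {lam | Complex.cos (gg j lam) ≠ 0} := by
        ext lam
        constructor
        · intro h
          exact ⟨fun i hi => h i (by omega), h j (by omega)⟩
        · rintro ⟨h1, h2⟩ i hi
          rcases Nat.lt_succ_iff_lt_or_eq.mp hi with h | h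
          · exact h1 i h
          · rw [h]; exact h2
      have hZc : (AA j ∩ {lam | Complex.cos (gg j lam) = 0}).Countable := by
        set Z := AA j ∩ {lam | Complex.cos (gg j lam) = 0} with hZ
        have hdisc : DiscreteTopology Z := by
          rw [discreteTopology_subtype_iff]
          intro x hxZ
          have hev := cos_gg_eventually_ne j hc han hxZ.1
          have h1 : {z : ℂ | Complex.cos (gg j z) ≠ 0} ∈ 𝓝[≠] x := hev
          have h2 : Z ∈ 𝓟 Z := Filter.mem_principal_self Z
          have hmem := Filter.inter_mem_inf h1 h2
          have hempty : {z : ℂ | Complex.cos (gg j z) ≠ 0} ∩ Z = ∅ := by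
            ext z
            simp only [Set.mem_inter_iff, Set.mem_setOf_eq, Set.mem_empty_iff_false, iff_false]
            rintro ⟨hne, _, hz⟩
            exact hne hz
          rw [hempty] at hmem
          exact Filter.empty_mem_iff_bot.mp hmem
        have : Countable Z := by
          have : TopologicalSpace.SeparableSpace Z := by infer_instance
          exact (TopologicalSpace.separableSpace_iff_countable).mp this
        exact Set.countable_coe_iff.mp this
      refine ⟨?_, ?_, ?_⟩
      · rw [hsucc_eq, isOpen_iff_mem_nhds]
        rintro x ⟨hx1, hx2⟩
        exact Filter.inter_mem (ho.mem_nhds hx1) ((hφan x hx1).continuousAt.eventually_ne hx2)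
      · have : (AA (j+1))ᶜ ⊆ (AA j)ᶜ ∪ (AA j ∩ {lam | Complex.cos (gg j lam) = 0}) := by
          rw [hsucc_eq]
          intro x hx
          by_cases h : x ∈ AA j
          · right
            refine ⟨h, ?_⟩
            by_contra hne
            exact hx ⟨h, hne⟩
          · left; exact h
        exact Set.Countable.mono this (hc.union hZc)
      · intro x hx
        rw [hsucc_eq] at hx
        have hgeq : gg (j+1) = fun lam => lam * Complex.sin (gg j lam) / Complex.cos (gg j lam) :=
          funext (gg_succ j)
        rw [hgeq]
        have hs : AnalyticAt ℂ (fun lam => Complex.sin (gg j lam)) x := by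
          exact
            (Complex.differentiable_sin.analyticAt (gg j x)).comp (han x hx.1)
        have hcs : AnalyticAt ℂ (fun lam => Complex.cos (gg j lam)) x := hφan x hx.1
        exact (analyticAt_id.mul hs).div hcs hx.2

/-- Virtual centers of order `p` accumulate at each virtual center of order
`p−1`: if `iλ₀` is a prepole of `f_{λ₀}` of order `p−1`, then arbitrarily close
to `λ₀` there is `λ ≠ λ₀` with `iλ` a prepole of `f_λ` of order `p`. -/
theorem virtual_centers_accumulate (p : ℕ) (hp : 2 ≤ p) (lam0 : ℂ) (h0 : lam0 ≠ 0)
    (hpre : IsPrepole lam0 (p - 1) (Complex.I * lam0)) :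
    ∀ ε > (0 : ℝ), ∃ lam : ℂ, lam ≠ 0 ∧
      0 < ‖lam - lam0‖ ∧ ‖lam - lam0‖ < ε ∧
      IsPrepole lam p (Complex.I * lam) := by
  intro ε hε
  set n := p - 2 with hn
  have hpn : p - 1 = n + 1 := by omega
  have hpn' : p - 1 - 1 = n := by omega
  obtain ⟨hcos0, hne⟩ := hpre
  rw [hpn'] at hcos0 hne
  -- hcos0 : cos (gg n lam0) = 0
  have hcos0' : Complex.cos (gg n lam0) = 0 := hcos0
  have hlam0A : lam0 ∈ AA n := fun i hi => hne i hi
  obtain ⟨hoA, hcA, hanA⟩ := main_ind n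
  -- sin at the pole is nonzero
  have hsin0 : Complex.sin (gg n lam0) ≠ 0 := by
    intro h
    have h1 := Complex.sin_sq_add_cos_sq (gg n lam0)
    rw [h, hcos0'] at h1
    simp at h1
  -- the function ψ
  set ψ : ℂ → ℂ := fun lam => Complex.cos (gg n lam) / (lam * Complex.sin (gg n lam)) with hψ
  have hc_an : AnalyticAt ℂ (fun lam => Complex.cos (gg n lam)) lam0 := by
    exact
      (Complex.differentiable_cos.analyticAt (gg n lam0)).comp (hanA lam0 hlam0A)
  have hs_an : AnalyticAt ℂ (fun lam => Complex.sin (gg n lam)) lam0 := by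
    exact
      (Complex.differentiable_sin.analyticAt (gg n lam0)).comp (hanA lam0 hlam0A)
  have hden0 : lam0 * Complex.sin (gg n lam0) ≠ 0 := mul_ne_zero h0 hsin0
  have hψan : AnalyticAt ℂ ψ lam0 := hc_an.div (analyticAt_id.mul hs_an) hden0
  have hψ0 : ψ lam0 = 0 := by simp [hψ, hcos0']
  -- the eventual facts near lam0
  have hE1 : ∀ᶠ lam in 𝓝 lam0, lam ≠ 0 := eventually_ne_nhds h0
  have hE2 : ∀ᶠ lam in 𝓝 lam0, ∀ j < n, Complex.cos (gg j lam) ≠ 0 := by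
    have hfin : (Set.Iio n).Finite := Set.finite_Iio n
    have : ∀ᶠ lam in 𝓝 lam0, ∀ j ∈ Set.Iio n, Complex.cos (gg j lam) ≠ 0 := by
      rw [Filter.eventually_all_finite hfin]
      intro j hj
      have hj' : j < n := hj
      have hanj := (main_ind j).2.2 lam0 (AA_anti hj'.le hlam0A)
      have hcj : ContinuousAt (fun lam => Complex.cos (gg j lam)) lam0 := by
        have : AnalyticAt ℂ (fun lam => Complex.cos (gg j lam)) lam0 := by
          exact
            (Complex.differentiable_cos.analyticAt (gg j lam0)).comp hanj
        exact this.continuousAt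
      exact hcj.eventually_ne (hne j hj')
    exact this
  have hE3 : ∀ᶠ lam in 𝓝 lam0, Complex.sin (gg n lam) ≠ 0 :=
    hs_an.continuousAt.eventually_ne hsin0
  have hE4 : ∀ᶠ lam in 𝓝[≠] lam0, Complex.cos (gg n lam) ≠ 0 :=
    cos_gg_eventually_ne n hcA hanA hlam0A
  have hT : ∀ᶠ lam in 𝓝[≠] lam0, Complex.cos (gg n lam) ≠ 0 ∧ lam ≠ 0 ∧
      (∀ j < n, Complex.cos (gg j lam) ≠ 0) ∧ Complex.sin (gg n lam) ≠ 0 :=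
    hE4.and (((hE1.and (hE2.and hE3))).filter_mono nhdsWithin_le_nhds)
  rw [eventually_nhdsWithin_iff] at hT
  rw [Metric.eventually_nhds_iff] at hT
  obtain ⟨δ, hδpos, hδ⟩ := hT
  set δ' : ℝ := min δ ε with hδ'
  have hδ'pos : 0 < δ' := lt_min hδpos hε
  -- open mapping
  rcases hψan.eventually_constant_or_nhds_le_map_nhds with hconst | hmap
  · exfalso
    rw [hψ0] at hconst
    have hcomb := (hconst.filter_mono nhdsWithin_le_nhds).and
      (cos_gg_eventually_ne n hcA hanA hlam0A |>.and
        ((hE1.and hE3).filter_mono nhdsWithin_le_nhds))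
    obtain ⟨lam, hψlam, hcosne, hlamne, hsinne⟩ := hcomb.exists
    have hden : lam * Complex.sin (gg n lam) ≠ 0 := mul_ne_zero hlamne hsinne
    rw [hψ, div_eq_zero_iff] at hψlam
    rcases hψlam with h | h
    · exact hcosne h
    · exact hden h
  · rw [hψ0] at hmap
    have hball : ψ '' Metric.ball lam0 δ' ∈ Filter.map ψ (𝓝 lam0) := by
      rw [Filter.mem_map]
      exact Filter.mem_of_superset (Metric.ball_mem_nhds lam0 hδ'pos)
        (Set.subset_preimage_image ψ _)
    have hnhds0 : ψ '' Metric.ball lam0 δ' ∈ 𝓝 (0 : ℂ) := hmap hball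
    obtain ⟨r, hr, hrsub⟩ := Metric.mem_nhds_iff.mp hnhds0
    obtain ⟨k, hk⟩ := exists_nat_gt (1 / r)
    set v : ℝ := (2 * (k : ℝ) + 1) * Real.pi / 2 with hv
    have hπ := Real.pi_gt_three
    have hkpos : (0 : ℝ) ≤ (k : ℝ) := Nat.cast_nonneg k
    have hvpos : 0 < v := by positivity
    have hvbig : 1 / r < v := by
      have h1 : (k : ℝ) ≤ v := by
        rw [hv]
        nlinarith
      calc 1 / r < (k : ℝ) := hk
        _ ≤ v := h1
    set t : ℂ := ((v : ℝ) : ℂ)⁻¹ with ht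
    have htne : t ≠ 0 := by
      simp only [ht, ne_eq, inv_eq_zero, Complex.ofReal_eq_zero]
      exact ne_of_gt hvpos
    have htmem : t ∈ Metric.ball (0 : ℂ) r := by
      rw [Metric.mem_ball, dist_zero_right, ht]
      rw [norm_inv, Complex.norm_real, Real.norm_eq_abs, abs_of_pos hvpos]
      rw [inv_lt_comm₀ hvpos hr] at *
      · exact lt_of_le_of_lt (le_of_eq rfl) (by rwa [one_div] at hvbig)
    obtain ⟨lam, hlamball, hψlam⟩ := hrsub htmem
    have hlamne : lam ≠ lam0 := by
      intro h
      rw [h, hψ0] at hψlam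
      exact htne hψlam.symm
    have hdist : dist lam lam0 < δ := lt_of_lt_of_le (Metric.mem_ball.mp hlamball) (min_le_left _ _)
    obtain ⟨hcosn, hlam0', hprev, hsinn⟩ := hδ hdist hlamne
    have hden : lam * Complex.sin (gg n lam) ≠ 0 := mul_ne_zero hlam0' hsinn
    -- compute gg (n+1) lam
    have hcoseq : Complex.cos (gg n lam) = t * (lam * Complex.sin (gg n lam)) := by
      rw [← hψlam]
      field_simp [hψ]
      simp only [hψ]; rw [mul_assoc, div_mul_cancel₀ _ hden]
    have hgval : gg (n+1) lam = ((v : ℝ) : ℂ) := by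
      rw [gg_succ, hcoseq, ht]
      field_simp
    have hcosval : Complex.cos (gg (n+1) lam) = 0 := by
      rw [hgval, Complex.cos_eq_zero_iff]
      exact ⟨(k : ℤ), by push_cast [hv]; ring⟩
    refine ⟨lam, hlam0', ?_, ?_, ?_, ?_⟩
    · rw [norm_pos_iff]
      exact sub_ne_zero_of_ne hlamne
    · rw [← Complex.dist_eq]
      exact lt_of_lt_of_le (Metric.mem_ball.mp hlamball) (min_le_right _ _)
    · show Complex.cos ((ftan lam)^[p-1] (Complex.I * lam)) = 0
      rw [hpn]
      exact hcosval
    · intro j hj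
      rw [hpn] at hj
      rcases Nat.lt_succ_iff_lt_or_eq.mp hj with h | h
      · exact hprev j h
      · rw [h]; exact hcosn
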